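/- Condition 2 does not imply Condition 1: if the artefact type A has at least two distinct elements, then there exists a scientist M : List A → P (for instance one that outputs the last novel artefact seen) satisfying Condition 2 — for all experiences σ and artefacts a, M σ ≠ M (σ ++ [a]) implies a ∉ content σ — but NOT satisfying Condition 1, i.e., M is not set-driven: there exist experiences σ, τ with content σ = content τ but M σ ≠ M τ. -/

import Mathlib

/-- The inspiring set (content) of an experience: the set of artefacts occurring in it. -/
def content {A : Type*} (σ : List A) : Set A := {a | a ∈ σ}

/-- Condition 2 does not imply Condition 1: if the artefact type has two distinct
elements, there is a scientist for which every transformative artefact is novel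
(Condition 2) but which is not set-driven (not Condition 1). -/
theorem condition2_not_implies_condition1
    {A : Type} (a b : A) (hab : a ≠ b) :
    ∃ (P : Type) (M : List A → P),
      (∀ (σ : List A) (x : A), M σ ≠ M (σ ++ [x]) → x ∉ content σ) ∧
      ∃ σ τ : List A, content σ = content τ ∧ M σ ≠ M τ := by
  have := Classical.decEq A
  refine ⟨List A, fun σ => σ.reverse.dedup, ?_, [a, b], [b, a], ?_, ?_⟩
  · intro σ x h hx
    apply h
    show σ.reverse.dedup = (σ ++ [x]).reverse.dedup
    symm
    rw [List.reverse_append, List.reverse_singleton, List.singleton_append,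
      List.dedup_cons_of_mem (by simpa [content] using hx)]
  · ext x
    simp only [content, Set.mem_setOf_eq, List.mem_cons, List.not_mem_nil]
    tauto
  · simp [List.dedup_cons_of_notMem, hab, Ne.symm hab]
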